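/- Let K be a field of characteristic 0, n ≥ 1, and A an n×n matrix over K. Let D = [[0, A], [−Aᵀ, 0]] be the associated (2n)×(2n) block matrix. Then the characteristic polynomial of D is separable if and only if the characteristic polynomial of A Aᵀ is separable and det(A) ≠ 0. -/

import Mathlib

open Matrix

open Polynomial

section Aux


variable {K : Type*} [Field K]

private lemma aux_isUnit_comp_X_sq {d : K[X]} (h : IsUnit (d.comp (X ^ 2))) : IsUnit d := by
  have h0 : (d.comp (X ^ 2)).natDegree = 0 := natDegree_eq_zero_of_isUnit h
  rw [natDegree_comp, natDegree_X_pow, Nat.mul_eq_zero] at h0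
  have hd : d.natDegree = 0 := by omega
  obtain ⟨c, rfl⟩ := natDegree_eq_zero.mp hd
  rwa [C_comp] at h

private lemma aux_sep_unit_mul [CharZero K] {u p : K[X]} (hu : IsUnit u) :
    (u * p).Separable ↔ p.Separable := by
  rw [PerfectField.separable_iff_squarefree, PerfectField.separable_iff_squarefree]
  constructor
  · exact fun h => h.of_mul_right
  · intro h d hd
    exact h d (hu.dvd_mul_left.mp hd)

private lemma aux_sep_comp_neg_X {p : K[X]} (h : p.Separable) : (p.comp (-X)).Separable := by
  rw [separable_def] at h ⊢
  have h2 := h.map ((aeval (-X : K[X])).toRingHom : K[X] →+* K[X])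
  simp only [AlgHom.toRingHom_eq_coe, RingHom.coe_coe, ← comp_eq_aeval] at h2
  rw [derivative_comp, derivative_neg, derivative_X]
  have : -(1:K[X]) * (derivative p).comp (-X) = -((derivative p).comp (-X)) := by ring
  rw [this]
  exact h2.neg_right

private lemma aux_sep_comp_neg_X_iff {p : K[X]} :
    (p.comp (-X)).Separable ↔ p.Separable := by
  constructor
  · intro h
    have := aux_sep_comp_neg_X h
    rwa [comp_assoc, neg_comp, X_comp, neg_neg, comp_X] at this
  · exact aux_sep_comp_neg_X

private lemma aux_sep_comp_X_sq [CharZero K] {p : K[X]} :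
    (p.comp (X ^ 2)).Separable ↔ p.Separable ∧ p.coeff 0 ≠ 0 := by
  constructor
  · intro h
    have hsq : Squarefree (p.comp (X ^ 2)) := PerfectField.separable_iff_squarefree.mp h
    refine ⟨?_, ?_⟩
    · rw [PerfectField.separable_iff_squarefree]
      intro d hd
      obtain ⟨r, hr⟩ := hd
      have : d.comp (X ^ 2) * d.comp (X ^ 2) ∣ p.comp (X ^ 2) :=
        ⟨r.comp (X ^ 2), by rw [hr, mul_comp, mul_comp]⟩
      exact aux_isUnit_comp_X_sq (hsq _ this)
    · intro h0
      obtain ⟨r, hr⟩ := X_dvd_iff.mpr h0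
      have : (X : K[X]) * X ∣ p.comp (X ^ 2) :=
        ⟨r.comp (X ^ 2), by rw [hr, mul_comp, X_comp, sq]⟩
      exact not_isUnit_X (hsq X this)
  · rintro ⟨hp, h0⟩
    rw [separable_def] at hp ⊢
    rw [derivative_comp, derivative_X_pow]
    have hf0 : (p.comp (X ^ 2)).coeff 0 ≠ 0 := by
      rw [coeff_zero_eq_eval_zero, eval_comp, eval_pow, eval_X, zero_pow two_ne_zero,
        ← coeff_zero_eq_eval_zero]
      exact h0
    have hX : IsCoprime (p.comp (X ^ 2)) (X : K[X]) := by
      refine (Polynomial.prime_X.coprime_iff_not_dvd.mpr ?_).symm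
      intro hdvd
      exact hf0 (X_dvd_iff.mp hdvd)
    have h2 : IsCoprime (p.comp (X ^ 2)) (C (2 : K)) :=
      ⟨0, C (2 : K)⁻¹, by
        rw [zero_mul, zero_add, ← C_mul, inv_mul_cancel₀ (two_ne_zero), C_1]⟩
    have hcomp : IsCoprime (p.comp (X ^ 2)) ((derivative p).comp (X ^ 2)) := by
      have := hp.map ((aeval (X ^ 2 : K[X])).toRingHom : K[X] →+* K[X])
      simpa only [AlgHom.toRingHom_eq_coe, RingHom.coe_coe, ← comp_eq_aeval] using this
    simp only [Nat.cast_ofNat]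
    exact (h2.mul_right hX.pow_right).mul_right hcomp

private lemma aux_eval_charpoly {m : Type*} [Fintype m] [DecidableEq m]
    (M : Matrix m m K) (x : K) :
    M.charpoly.eval x = (x • (1 : Matrix m m K) - M).det := by
  rw [Matrix.charpoly, show (Polynomial.eval x : K[X] → K) = (Polynomial.evalRingHom x : K[X] →+* K) from rfl,
    RingHom.map_det]
  congr 1
  ext i j
  by_cases h : i = j
  · subst h
    simp [charmatrix_apply_eq, Matrix.one_apply]
  · simp [charmatrix_apply_ne _ _ _ h, Matrix.one_apply, h]

private lemma aux_charpoly_skew {n : ℕ} (A : Matrix (Fin n) (Fin n) K) [CharZero K] :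
    (Matrix.fromBlocks 0 A (-Aᵀ) 0).charpoly
      = C ((-1 : K) ^ n) * ((A * Aᵀ).charpoly.comp (-(X ^ 2))) := by
  apply eq_of_infinite_eval_eq
  have hinf : ({x : K | x ≠ 0}).Infinite := by
    have : ({x : K | x ≠ 0}) = ({(0 : K)}ᶜ) := by ext y; simp
    rw [this]
    exact (Set.finite_singleton (0 : K)).infinite_compl
  apply hinf.mono
  intro x hx
  · 
    have hx : x ≠ 0 := hx
    show _ = _
    -- LHS
    have h1 : x • (1 : Matrix (Fin n ⊕ Fin n) (Fin n ⊕ Fin n) K)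
        - Matrix.fromBlocks 0 A (-Aᵀ) 0
        = Matrix.fromBlocks (x • 1) (-A) Aᵀ (x • 1) := by
      ext (i | i) (j | j) <;>
        simp [Matrix.fromBlocks, Matrix.one_apply]
    haveI : Invertible (x • (1 : Matrix (Fin n) (Fin n) K)) :=
      ⟨x⁻¹ • 1, by simp [Matrix.smul_mul, smul_smul, inv_mul_cancel₀ hx, mul_inv_cancel₀ hx],
        by simp [Matrix.smul_mul, smul_smul, inv_mul_cancel₀ hx, mul_inv_cancel₀ hx]⟩
    have hinv : (⅟ (x • (1 : Matrix (Fin n) (Fin n) K))) = x⁻¹ • 1 :=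
      invOf_eq_right_inv
        (by simp [Matrix.smul_mul, smul_smul, inv_mul_cancel₀ hx, mul_inv_cancel₀ hx])
    have h2 : (-A) * (x⁻¹ • (1 : Matrix (Fin n) (Fin n) K)) * Aᵀ
        = -(x⁻¹ • (A * Aᵀ)) := by
      simp [Matrix.mul_smul, Matrix.smul_mul]
    have hL : ((Matrix.fromBlocks 0 A (-Aᵀ) 0).charpoly).eval x
        = ((x ^ 2) • (1 : Matrix (Fin n) (Fin n) K) + A * Aᵀ).det := by
      rw [aux_eval_charpoly, h1, Matrix.det_fromBlocks₂₂, hinv, h2, sub_neg_eq_add,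
        ← Matrix.det_mul]
      congr 1
      rw [Matrix.mul_add]
      simp [Matrix.smul_mul, smul_smul, mul_inv_cancel₀ hx, inv_mul_cancel₀ hx, sq]
    -- RHS
    have hR : (C ((-1 : K) ^ n) * ((A * Aᵀ).charpoly.comp (-(X ^ 2)))).eval x
        = ((x ^ 2) • (1 : Matrix (Fin n) (Fin n) K) + A * Aᵀ).det := by
      rw [eval_mul, eval_C, eval_comp, eval_neg, eval_pow, eval_X, aux_eval_charpoly]
      have : (-(x ^ 2)) • (1 : Matrix (Fin n) (Fin n) K) - A * Aᵀ
          = -((x ^ 2) • (1 : Matrix (Fin n) (Fin n) K) + A * Aᵀ) := by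
        rw [neg_smul, neg_add, sub_eq_add_neg]
      rw [this, Matrix.det_neg, Fintype.card_fin, ← mul_assoc, ← mul_pow]
      simp
    rw [hL, hR]

end Aux

/-- For an `n × n` matrix `A` over a field of characteristic zero, the
characteristic polynomial of the block matrix `D = [[0, A], [-Aᵀ, 0]]` is
separable if and only if the characteristic polynomial of `A Aᵀ` is separable
and `det A ≠ 0`. -/
theorem charpoly_fromBlocks_skew_separable_iff
    (K : Type*) [Field K] [CharZero K] (n : ℕ) (hn : 1 ≤ n)
    (A : Matrix (Fin n) (Fin n) K) :
    (Matrix.fromBlocks 0 A (-Aᵀ) 0).charpoly.Separable ↔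
      (A * Aᵀ).charpoly.Separable ∧ A.det ≠ 0 := by
  set q := (A * Aᵀ).charpoly with hq
  rw [aux_charpoly_skew, aux_sep_unit_mul (isUnit_C.mpr ((isUnit_one.neg).pow n))]
  have hsplit : q.comp (-(X ^ 2)) = (q.comp (-X)).comp (X ^ 2) := by
    rw [comp_assoc, neg_comp, X_comp]
  rw [hsplit, aux_sep_comp_X_sq, aux_sep_comp_neg_X_iff]
  have hc0 : (q.comp (-X)).coeff 0 = q.coeff 0 := by
    rw [coeff_zero_eq_eval_zero, eval_comp, eval_neg, eval_X, neg_zero,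
      ← coeff_zero_eq_eval_zero]
  have hdet := Matrix.det_eq_sign_charpoly_coeff (A * Aᵀ)
  rw [Fintype.card_fin] at hdet
  have hdet2 : A.det * A.det = (-1 : K) ^ n * q.coeff 0 := by
    rw [← hdet, Matrix.det_mul, Matrix.det_transpose]
  constructor
  · rintro ⟨hs, h0⟩
    refine ⟨hs, fun hA => ?_⟩
    rw [hc0] at h0
    apply h0
    have : (0 : K) = (-1 : K) ^ n * q.coeff 0 := by rw [← hdet2, hA, zero_mul]
    have hne : ((-1 : K) ^ n) ≠ 0 := pow_ne_zero _ (by norm_num)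
    field_simp at this
    exact (mul_eq_zero.mp this.symm).resolve_left hne
  · rintro ⟨hs, hA⟩
    refine ⟨hs, ?_⟩
    rw [hc0]
    intro h0
    rw [h0, mul_zero] at hdet2
    exact hA (by
      have := mul_self_eq_zero.mp hdet2
      exact this)
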